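/- Variance estimate in the light-tail case: let Y be a random variable with E|Y|^{1+ε} < ∞ for some ε ∈ (0,1], let |f(X)| ≤ M, |f*(X)| ≤ M, σ ≥ max(2M,1), and ψ satisfy the strong mean-calibration conditions. Setting ξ = σ²ψ((Y-f*(X))²/σ²) - σ²ψ((Y-f(X))²/σ²), one has E[ξ²] ≤ c₁·σ^{1-ε} where c₁ = 2^{4+2ε} L₁^{1-ε} L₃^{1+ε} M² (E|Y|^{1+ε} + M^{1+ε}). -/

import Mathlib

open MeasureTheory

lemma aux_sq_le {a A B ε : ℝ} (hε0 : 0 ≤ ε) (hε1 : ε ≤ 1) (ha : 0 ≤ a)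
    (hA0 : 0 ≤ A) (hB0 : 0 ≤ B) (hA : a ≤ A) (hB : a ≤ B) :
    a ^ 2 ≤ A ^ (1 - ε) * B ^ (1 + ε) := by
  rcases eq_or_lt_of_le ha with h | h
  · rw [← h]
    norm_num
    positivity
  · have h1 : a ^ 2 = a ^ ((1 - ε) + (1 + ε)) := by
      rw [show (1 - ε) + (1 + ε) = (2 : ℝ) by ring]
      rw [show (2:ℝ) = ((2:ℕ):ℝ) by norm_num, Real.rpow_natCast]
    rw [h1, Real.rpow_add h]
    exact mul_le_mul (Real.rpow_le_rpow ha hA (by linarith))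
      (Real.rpow_le_rpow ha hB (by linarith)) (Real.rpow_nonneg ha _)
      (Real.rpow_nonneg hA0 _)

lemma aux_add_rpow {y M p : ℝ} (hy : 0 ≤ y) (hM : 0 ≤ M) (hp : 0 ≤ p) :
    (y + M) ^ p ≤ 2 ^ p * (y ^ p + M ^ p) := by
  have h1 : y + M ≤ 2 * max y M := by
    rcases le_total y M with h | h
    · simp [max_eq_right h]; linarith
    · simp [max_eq_left h]; linarith
  have h2 : (y + M) ^ p ≤ (2 * max y M) ^ p :=
    Real.rpow_le_rpow (by linarith) h1 hp
  rw [Real.mul_rpow (by norm_num) (le_max_of_le_left hy)] at h2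
  refine h2.trans (mul_le_mul_of_nonneg_left ?_ (Real.rpow_nonneg (by norm_num) _))
  rcases max_cases y M with ⟨h, _⟩ | ⟨h, _⟩ <;> rw [h]
  · nlinarith [Real.rpow_nonneg hM p]
  · nlinarith [Real.rpow_nonneg hy p]

/-- Variance estimate, light-tail case `0 < ε ≤ 1`:
`E[ξ²] ≤ c₁ σ^{1-ε}` with
`c₁ = 2^{4+2ε} L₁^{1-ε} L₃^{1+ε} M² (E|Y|^{1+ε} + M^{1+ε})`, where
`ξ = σ²ψ((Y-f*(X))²/σ²) - σ²ψ((Y-f(X))²/σ²)`. -/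
theorem stmt10 {Ω 𝒳 : Type*} [MeasurableSpace Ω] [MeasurableSpace 𝒳]
    (μ : Measure Ω) [IsProbabilityMeasure μ]
    (X : Ω → 𝒳) (Y : Ω → ℝ) (hX : Measurable X) (hY : Measurable Y)
    (f fstar : 𝒳 → ℝ) (hf : Measurable f) (hfstar : Measurable fstar)
    (ψ : ℝ → ℝ) (hψmeas : Measurable ψ)
    (ε M L₁ L₃ σ : ℝ) (hε : 0 < ε) (hε1 : ε ≤ 1) (hM : 0 < M)
    (hσ : max (2 * M) 1 ≤ σ)
    (hfM : ∀ x, |f x| ≤ M) (hfstarM : ∀ x, |fstar x| ≤ M)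
    (hL₁ : ∀ s t : ℝ, |ψ (s ^ 2) - ψ (t ^ 2)| ≤ L₁ * |s - t|)
    (hL₃ : ∀ s t : ℝ, 0 ≤ s → 0 ≤ t → |ψ s - ψ t| ≤ L₃ * |s - t|)
    (hmom : Integrable (fun ω => |Y ω| ^ (1 + ε)) μ) :
    ∫ ω, (σ ^ 2 * ψ ((Y ω - fstar (X ω)) ^ 2 / σ ^ 2) -
          σ ^ 2 * ψ ((Y ω - f (X ω)) ^ 2 / σ ^ 2)) ^ 2 ∂μ ≤
      2 ^ (4 + 2 * ε) * L₁ ^ (1 - ε) * L₃ ^ (1 + ε) * M ^ 2 *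
          ((∫ ω, |Y ω| ^ (1 + ε) ∂μ) + M ^ (1 + ε)) *
        σ ^ (1 - ε) := by
  have hσ1 : (1:ℝ) ≤ σ := le_trans (le_max_right _ _) hσ
  have hσ0 : (0:ℝ) < σ := lt_of_lt_of_le one_pos hσ1
  have hL₁0 : 0 ≤ L₁ := by
    have := hL₁ 1 0
    simp at this
    exact le_trans (abs_nonneg _) this
  have hL₃0 : 0 ≤ L₃ := by
    have := hL₃ 1 0 zero_le_one le_rfl
    simp at this
    exact le_trans (abs_nonneg _) this
  set K : ℝ := 2 ^ (4 + 2 * ε) * L₁ ^ (1 - ε) * L₃ ^ (1 + ε) * M ^ 2 * σ ^ (1 - ε)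
    with hK
  have hK0 : 0 ≤ K := by positivity
  -- pointwise bound
  have key : ∀ ω, (σ ^ 2 * ψ ((Y ω - fstar (X ω)) ^ 2 / σ ^ 2) -
      σ ^ 2 * ψ ((Y ω - f (X ω)) ^ 2 / σ ^ 2)) ^ 2 ≤
      K * (|Y ω| ^ (1 + ε) + M ^ (1 + ε)) := by
    intro ω
    set y := Y ω
    set a := fstar (X ω)
    set b := f (X ω)
    have haM : |a| ≤ M := hfstarM _
    have hbM : |b| ≤ M := hfM _
    set ξ : ℝ := σ ^ 2 * ψ ((y - a) ^ 2 / σ ^ 2) - σ ^ 2 * ψ ((y - b) ^ 2 / σ ^ 2)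
      with hξ
    have hboundA : |ξ| ≤ 2 * L₁ * M * σ := by
      have e1 : (y - a) ^ 2 / σ ^ 2 = ((y - a) / σ) ^ 2 := by
        rw [div_pow]
      have e2 : (y - b) ^ 2 / σ ^ 2 = ((y - b) / σ) ^ 2 := by
        rw [div_pow]
      have : |ξ| = σ ^ 2 * |ψ (((y - a)/σ) ^ 2) - ψ (((y - b)/σ) ^ 2)| := by
        rw [hξ, e1, e2, ← mul_sub, abs_mul, abs_of_nonneg (by positivity : (0:ℝ) ≤ σ ^ 2)]
      rw [this]
      have h3 := hL₁ ((y - a)/σ) ((y - b)/σ)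
      have h4 : |(y - a)/σ - (y - b)/σ| = |b - a| / σ := by
        rw [div_sub_div_same, abs_div, abs_of_pos hσ0]
        ring_nf
      rw [h4] at h3
      have h5 : |b - a| ≤ 2 * M := by
        calc |b - a| ≤ |b| + |a| := abs_sub _ _
        _ ≤ 2 * M := by linarith
      have h6 : σ ^ 2 * |ψ (((y - a)/σ) ^ 2) - ψ (((y - b)/σ) ^ 2)| ≤
          σ ^ 2 * (L₁ * (|b - a| / σ)) :=
        mul_le_mul_of_nonneg_left h3 (by positivity)
      refine h6.trans ?_
      rw [show σ ^ 2 * (L₁ * (|b - a| / σ)) = L₁ * |b - a| * σ by field_simp]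
      have : L₁ * |b - a| ≤ L₁ * (2 * M) := mul_le_mul_of_nonneg_left h5 hL₁0
      nlinarith
    have hboundB : |ξ| ≤ 4 * M * L₃ * (|y| + M) := by
      have h3 := hL₃ ((y - a) ^ 2 / σ ^ 2) ((y - b) ^ 2 / σ ^ 2)
        (by positivity) (by positivity)
      have h4 : (y - a) ^ 2 / σ ^ 2 - (y - b) ^ 2 / σ ^ 2 =
          ((y - a) ^ 2 - (y - b) ^ 2) / σ ^ 2 := by ring
      have : |ξ| = σ ^ 2 * |ψ ((y - a) ^ 2 / σ ^ 2) - ψ ((y - b) ^ 2 / σ ^ 2)| := by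
        rw [hξ, ← mul_sub, abs_mul, abs_of_nonneg (by positivity : (0:ℝ) ≤ σ ^ 2)]
      rw [this]
      have h6 : σ ^ 2 * |ψ ((y - a) ^ 2 / σ ^ 2) - ψ ((y - b) ^ 2 / σ ^ 2)| ≤
          σ ^ 2 * (L₃ * |(y - a) ^ 2 / σ ^ 2 - (y - b) ^ 2 / σ ^ 2|) :=
        mul_le_mul_of_nonneg_left h3 (by positivity)
      refine h6.trans ?_
      rw [h4, abs_div, abs_of_nonneg (by positivity : (0:ℝ) ≤ σ ^ 2)]
      rw [show σ ^ 2 * (L₃ * (|(y - a) ^ 2 - (y - b) ^ 2| / σ ^ 2)) =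
        L₃ * |(y - a) ^ 2 - (y - b) ^ 2| by field_simp]
      have h7 : (y - a) ^ 2 - (y - b) ^ 2 = (b - a) * (2 * y - a - b) := by ring
      rw [h7, abs_mul]
      have h8 : |b - a| ≤ 2 * M := by
        calc |b - a| ≤ |b| + |a| := abs_sub _ _
        _ ≤ 2 * M := by linarith
      have h9 : |2 * y - a - b| ≤ 2 * |y| + 2 * M := by
        calc |2 * y - a - b| ≤ |2 * y| + |a + b| := by
              rw [show 2 * y - a - b = 2 * y - (a + b) by ring]; exact abs_sub _ _
        _ ≤ 2 * |y| + 2 * M := by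
              have := abs_add_le a b
              rw [abs_mul, abs_two]
              have : |a + b| ≤ 2 * M := le_trans (abs_add_le a b) (by linarith)
              linarith
      calc L₃ * (|b - a| * |2 * y - a - b|) ≤ L₃ * ((2 * M) * (2 * |y| + 2 * M)) := by
            apply mul_le_mul_of_nonneg_left _ hL₃0
            exact mul_le_mul h8 h9 (abs_nonneg _) (by linarith)
      _ = 4 * M * L₃ * (|y| + M) := by ring
    -- combine
    have hA0 : (0:ℝ) ≤ 2 * L₁ * M * σ := by positivity
    have hB0 : (0:ℝ) ≤ 4 * M * L₃ * (|y| + M) := by positivity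
    have hsq : ξ ^ 2 ≤ (2 * L₁ * M * σ) ^ (1 - ε) * (4 * M * L₃ * (|y| + M)) ^ (1 + ε) := by
      have := aux_sq_le (le_of_lt hε) hε1 (abs_nonneg ξ) hA0 hB0 hboundA hboundB
      rwa [sq_abs] at this
    refine hsq.trans ?_
    -- expand rpow products
    have hy0 : (0:ℝ) ≤ |y| := abs_nonneg _
    have e1 : (2 * L₁ * M * σ) ^ (1 - ε) =
        2 ^ (1 - ε) * L₁ ^ (1 - ε) * M ^ (1 - ε) * σ ^ (1 - ε) := by
      rw [Real.mul_rpow (by positivity) (le_of_lt hσ0),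
          Real.mul_rpow (by positivity) (le_of_lt hM),
          Real.mul_rpow (by norm_num) hL₁0]
    have e2 : (4 * M * L₃ * (|y| + M)) ^ (1 + ε) =
        4 ^ (1 + ε) * M ^ (1 + ε) * L₃ ^ (1 + ε) * (|y| + M) ^ (1 + ε) := by
      rw [Real.mul_rpow (by positivity) (by positivity),
          Real.mul_rpow (by positivity) hL₃0,
          Real.mul_rpow (by norm_num) (le_of_lt hM)]
    rw [e1, e2]
    have e4 : (4:ℝ) ^ (1 + ε) = 2 ^ (2 * (1 + ε)) := by
      rw [Real.rpow_mul (by norm_num : (0:ℝ) ≤ 2)]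
      norm_num
    have e5 : (2:ℝ) ^ (1 - ε) * 2 ^ (2 * (1 + ε)) = 2 ^ (3 + ε) := by
      rw [← Real.rpow_add (by norm_num : (0:ℝ) < 2)]
      ring_nf
    have e6 : M ^ (1 - ε) * M ^ (1 + ε) = M ^ 2 := by
      rw [← Real.rpow_add hM, show (1 - ε) + (1 + ε) = (2:ℝ) by ring,
        show (2:ℝ) = ((2:ℕ):ℝ) by norm_num, Real.rpow_natCast]
    have e7 : (|y| + M) ^ (1 + ε) ≤ 2 ^ (1 + ε) * (|y| ^ (1 + ε) + M ^ (1 + ε)) :=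
      aux_add_rpow hy0 (le_of_lt hM) (by linarith)
    have e8 : (2:ℝ) ^ (3 + ε) * 2 ^ (1 + ε) = 2 ^ (4 + 2 * ε) := by
      rw [← Real.rpow_add (by norm_num : (0:ℝ) < 2)]
      ring_nf
    calc 2 ^ (1 - ε) * L₁ ^ (1 - ε) * M ^ (1 - ε) * σ ^ (1 - ε) *
          (4 ^ (1 + ε) * M ^ (1 + ε) * L₃ ^ (1 + ε) * (|y| + M) ^ (1 + ε))
        = (2 ^ (1 - ε) * 2 ^ (2 * (1 + ε))) * L₁ ^ (1 - ε) * L₃ ^ (1 + ε) *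
          (M ^ (1 - ε) * M ^ (1 + ε)) * σ ^ (1 - ε) * (|y| + M) ^ (1 + ε) := by
          rw [e4]; ring
      _ = 2 ^ (3 + ε) * L₁ ^ (1 - ε) * L₃ ^ (1 + ε) * M ^ 2 * σ ^ (1 - ε) *
          (|y| + M) ^ (1 + ε) := by rw [e5, e6]
      _ ≤ 2 ^ (3 + ε) * L₁ ^ (1 - ε) * L₃ ^ (1 + ε) * M ^ 2 * σ ^ (1 - ε) *
          (2 ^ (1 + ε) * (|y| ^ (1 + ε) + M ^ (1 + ε))) := by
          apply mul_le_mul_of_nonneg_left e7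
          positivity
      _ = K * (|y| ^ (1 + ε) + M ^ (1 + ε)) := by
          rw [hK, ← e8]; ring
  -- integrability
  have hint_h : Integrable (fun ω => |Y ω| ^ (1 + ε) + M ^ (1 + ε)) μ :=
    hmom.add (integrable_const _)
  have hint_Kh : Integrable (fun ω => K * (|Y ω| ^ (1 + ε) + M ^ (1 + ε))) μ :=
    hint_h.const_mul K
  have hg_meas : AEStronglyMeasurable (fun ω =>
      (σ ^ 2 * ψ ((Y ω - fstar (X ω)) ^ 2 / σ ^ 2) -
       σ ^ 2 * ψ ((Y ω - f (X ω)) ^ 2 / σ ^ 2)) ^ 2) μ := by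
    apply Measurable.aestronglyMeasurable
    fun_prop
  have hg_int : Integrable (fun ω =>
      (σ ^ 2 * ψ ((Y ω - fstar (X ω)) ^ 2 / σ ^ 2) -
       σ ^ 2 * ψ ((Y ω - f (X ω)) ^ 2 / σ ^ 2)) ^ 2) μ := by
    refine hint_Kh.mono' hg_meas (ae_of_all _ fun ω => ?_)
    rw [Real.norm_eq_abs, abs_of_nonneg (sq_nonneg _)]
    exact key ω
  calc ∫ ω, (σ ^ 2 * ψ ((Y ω - fstar (X ω)) ^ 2 / σ ^ 2) -
          σ ^ 2 * ψ ((Y ω - f (X ω)) ^ 2 / σ ^ 2)) ^ 2 ∂μ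
      ≤ ∫ ω, K * (|Y ω| ^ (1 + ε) + M ^ (1 + ε)) ∂μ :=
        integral_mono hg_int hint_Kh key
    _ = K * ((∫ ω, |Y ω| ^ (1 + ε) ∂μ) + M ^ (1 + ε)) := by
        rw [integral_const_mul, integral_add hmom (integrable_const _),
          integral_const, probReal_univ]
        simp
    _ = 2 ^ (4 + 2 * ε) * L₁ ^ (1 - ε) * L₃ ^ (1 + ε) * M ^ 2 *
          ((∫ ω, |Y ω| ^ (1 + ε) ∂μ) + M ^ (1 + ε)) * σ ^ (1 - ε) := by
        rw [hK]; ring
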